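/- For every η ∈ A₁ and every φ ∈ H₂: exp(i·S(η)) · α₂^{Tη}(φ + Tη) = exp(i·S(T̃⁻¹φ + η)) · α₁^{η}(T̃⁻¹φ + η). -/

import Mathlib

/-- The wave function `α^η : A → ℂ`,
`α^η(φ) = exp( (i/2)·θ(η, φ−η) + (i/2)·θ(φ, φ−η) − (1/4)·g(φ−η, φ−η) )`,
where `g(x,y) = Re ⟪x,y⟫`. -/
noncomputable def alphaFn {H A : Type*} [NormedAddCommGroup H] [InnerProductSpace ℂ H]
    [AddTorsor H A] (θ : A → H → ℝ) (η φ : A) : ℂ :=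
  Complex.exp ((Complex.I / 2) * ((θ η (φ -ᵥ η) : ℝ) : ℂ)
    + (Complex.I / 2) * ((θ φ (φ -ᵥ η) : ℝ) : ℂ)
    - (1/4 : ℂ) * (((inner ℂ (φ -ᵥ η) (φ -ᵥ η) : ℂ).re : ℝ) : ℂ))

/-- For the "evolution" setting with a unitary `T̃ : H₁ → H₂`
intertwined with `T : A₁ → A₂`, and `S` satisfying the corresponding affine-action
relation, one has for every `η ∈ A₁` and `φ ∈ H₂`:
`exp(i·S(η)) · α₂^{Tη}(φ + Tη) = exp(i·S(T̃⁻¹φ + η)) · α₁^{η}(T̃⁻¹φ + η)`. -/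
theorem statement13
    {H₁ A₁ H₂ A₂ : Type*}
    [NormedAddCommGroup H₁] [InnerProductSpace ℂ H₁] [CompleteSpace H₁]
    [NormedAddCommGroup H₂] [InnerProductSpace ℂ H₂] [CompleteSpace H₂]
    [AddTorsor H₁ A₁] [AddTorsor H₂ A₂]
    (θ₁ : A₁ → H₁ → ℝ) (hθ₁ : ∀ η : A₁, IsLinearMap ℝ (θ₁ η))
    (B₁ : H₁ → H₁ → ℝ)
    (hB₁₁ : ∀ y : H₁, IsLinearMap ℝ (fun x => B₁ x y))
    (hB₁₂ : ∀ x : H₁, IsLinearMap ℝ (B₁ x))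
    (hθB₁ : ∀ (η : A₁) (ξ ξ' : H₁), θ₁ (ξ +ᵥ η) ξ' = θ₁ η ξ' + B₁ ξ ξ')
    (hωB₁ : ∀ ξ ξ' : H₁,
      (1/2 : ℝ) * (inner ℂ ξ ξ' : ℂ).im = (1/2 : ℝ) * (B₁ ξ ξ' - B₁ ξ' ξ))
    (θ₂ : A₂ → H₂ → ℝ) (hθ₂ : ∀ η : A₂, IsLinearMap ℝ (θ₂ η))
    (B₂ : H₂ → H₂ → ℝ)
    (hB₂₁ : ∀ y : H₂, IsLinearMap ℝ (fun x => B₂ x y))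
    (hB₂₂ : ∀ x : H₂, IsLinearMap ℝ (B₂ x))
    (hθB₂ : ∀ (η : A₂) (ξ ξ' : H₂), θ₂ (ξ +ᵥ η) ξ' = θ₂ η ξ' + B₂ ξ ξ')
    (hωB₂ : ∀ ξ ξ' : H₂,
      (1/2 : ℝ) * (inner ℂ ξ ξ' : ℂ).im = (1/2 : ℝ) * (B₂ ξ ξ' - B₂ ξ' ξ))
    (T' : H₁ ≃ₗᵢ[ℂ] H₂)
    (T : A₁ → A₂) (hT : ∀ (η : A₁) (ξ : H₁), T (ξ +ᵥ η) = (T' ξ) +ᵥ T η)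
    (S : A₁ → ℝ)
    (hS : ∀ η η' : A₁,
      S η = S η'
        - (1/2 : ℝ) * (θ₁ η (η -ᵥ η') - θ₂ (T η) (T' (η -ᵥ η')))
        - (1/2 : ℝ) * (θ₁ η' (η -ᵥ η') - θ₂ (T η') (T' (η -ᵥ η')))) :
    ∀ (η : A₁) (φ : H₂),
      Complex.exp (Complex.I * ((S η : ℝ) : ℂ)) * alphaFn θ₂ (T η) (φ +ᵥ T η)
        = Complex.exp (Complex.I * ((S ((T'.symm φ) +ᵥ η) : ℝ) : ℂ))
          * alphaFn θ₁ η ((T'.symm φ) +ᵥ η) := by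
  intro η φ
  set ψ := T'.symm φ with hψ
  have hφ : T' ψ = φ := T'.apply_symm_apply φ
  have hinner : (inner ℂ φ φ : ℂ) = inner ℂ ψ ψ := by rw [← hφ]; exact T'.inner_map_map ψ ψ
  have hT2 : T (ψ +ᵥ η) = φ +ᵥ T η := by rw [hT, hφ]
  have hθ2 : θ₂ (φ +ᵥ T η) φ = θ₂ (T η) φ + B₂ φ φ := hθB₂ _ _ _
  have hθ1 : θ₁ (ψ +ᵥ η) ψ = θ₁ η ψ + B₁ ψ ψ := hθB₁ _ _ _
  have hSval : S (ψ +ᵥ η)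
      = S η - θ₁ η ψ + θ₂ (T η) φ - (1/2) * B₁ ψ ψ + (1/2) * B₂ φ φ := by
    have h := hS (ψ +ᵥ η) η
    rw [vadd_vsub, hT2, hφ, hθ1, hθ2] at h
    linarith
  unfold alphaFn
  rw [vadd_vsub, vadd_vsub, ← Complex.exp_add, ← Complex.exp_add]
  congr 1
  rw [hθ2, hθ1, hSval, hinner]
  push_cast
  ring
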